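/- A self-centralizing Lie algebra L of dimension greater than 2 is semisimple, i.e., possesses no nonzero abelian ideals. -/

import Mathlib

/-- The centralizer of an element of a Lie algebra, as a submodule. -/
def lieCentralizer (k : Type) {L : Type} [Field k] [LieRing L] [LieAlgebra k L]
    (l : L) : Submodule k L where
  carrier := {x | ⁅l, x⁆ = 0}
  add_mem' := by
    intro a b ha hb
    simp only [Set.mem_setOf_eq] at *
    rw [lie_add, ha, hb, add_zero]
  zero_mem' := by simp
  smul_mem' := by
    intro c x hx
    simp only [Set.mem_setOf_eq] at *
    rw [lie_smul, hx, smul_zero]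

/-- A self-centralizing Lie algebra of dimension greater than 2 has no nonzero
abelian ideals, i.e. is semisimple. -/
theorem stmt6 {k L : Type} [Field k] [CharZero k] [LieRing L] [LieAlgebra k L]
    (hsc : ∀ l : L, l ≠ 0 → Module.rank k (lieCentralizer k l) = 1)
    (hdim : 2 < Module.rank k L)
    (I : LieIdeal k L) (habelian : ∀ x ∈ I, ∀ y ∈ I, ⁅x, y⁆ = 0) :
    I = ⊥ := by
  by_contra hI
  obtain ⟨x, hxI, hx⟩ : ∃ x ∈ I, x ≠ 0 := by
    by_contra h
    push_neg at h
    exact hI (by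
      ext z
      simp only [LieSubmodule.mem_bot]
      exact ⟨fun hz => h z hz, fun hz => hz ▸ I.zero_mem⟩)
  have hker : LinearMap.ker (LieAlgebra.ad k L x) = lieCentralizer k x := by
    ext y
    simp [lieCentralizer, LieAlgebra.ad_apply, Submodule.mem_mk, LinearMap.mem_ker]
  have hrange : LinearMap.range (LieAlgebra.ad k L x) ≤ lieCentralizer k x := by
    rintro _ ⟨y, rfl⟩
    have h1 : ⁅x, y⁆ ∈ I := by
      have h0 : (⁅y, x⁆ : L) ∈ I := I.lie_mem hxI
      have h0' := I.neg_mem h0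
      rwa [lie_skew] at h0'
    exact habelian x hxI _ h1
  have h1 : Module.rank k (LinearMap.range (LieAlgebra.ad k L x)) ≤ 1 := by
    rw [← hsc x hx]
    exact Submodule.rank_mono hrange
  have h2 : Module.rank k (LinearMap.ker (LieAlgebra.ad k L x)) = 1 := by
    rw [hker]; exact hsc x hx
  have hrn := LinearMap.rank_range_add_rank_ker (LieAlgebra.ad k L x)
  rw [h2] at hrn
  have hle : Module.rank k L ≤ 2 := by
    rw [← hrn]
    calc Module.rank k (LinearMap.range (LieAlgebra.ad k L x)) + 1
        ≤ 1 + 1 := by exact add_le_add h1 le_rfl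
      _ = 2 := one_add_one_eq_two
  exact absurd hdim (not_lt.2 hle)
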